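/- Let b₁, b₂, b₃ ∈ {1, 2} and b be an integer with c := 3b + b₁ + b₂ + b₃ > 0. Let G be the group with presentation ⟨s₁, s₂, s₃, h | [sᵢ,h] for i = 1,2,3, sᵢ³h^{bᵢ} for i = 1,2,3, s₁s₂s₃h^{-b}⟩. Then the abelianization of G is isomorphic to ℤ/3 ⊕ ℤ/(3c). -/

import Mathlib

/-- Relations of the fundamental group of `M_333(b,b₁,b₂,b₃)`:
generators `s₁ = 0`, `s₂ = 1`, `s₃ = 2`, `h = 3`;
relations `[sᵢ,h]` and `sᵢ³h^{bᵢ}` (`i = 1,2,3`), `s₁s₂s₃h^{-b}`. -/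
def rels333 (b b₁ b₂ b₃ : ℤ) : Set (FreeGroup (Fin 4)) :=
  { r | (∃ i : Fin 3, r = .of i.castSucc * .of 3 * (.of i.castSucc)⁻¹ * (.of 3)⁻¹) ∨
        r = (.of 0) ^ (3 : ℤ) * (.of 3) ^ b₁ ∨
        r = (.of 1) ^ (3 : ℤ) * (.of 3) ^ b₂ ∨
        r = (.of 2) ^ (3 : ℤ) * (.of 3) ^ b₃ ∨
        r = .of 0 * .of 1 * .of 2 * (.of 3) ^ (-b) }

namespace M333aux

/-- first coordinates of the images of the generators -/
def pvec : Fin 4 → ℤ := ![0, 1, -1, 0]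

/-- second coordinates of the images of the generators -/
def qvec (b b₁ b₂ : ℤ) : Fin 4 → ℤ :=
  ![1 - 3*(b₁-1)*(2*b₁-3), -((2*b₁-3)*b₂),
    3*b*(2*b₁-3) - 1 + 3*(b₁-1)*(2*b₁-3) + (2*b₁-3)*b₂, 3*(2*b₁-3)]

@[simp] lemma pvec_0 : pvec 0 = 0 := rfl
@[simp] lemma pvec_1 : pvec 1 = 1 := rfl
@[simp] lemma pvec_2 : pvec 2 = -1 := rfl
@[simp] lemma pvec_3 : pvec 3 = 0 := rfl
@[simp] lemma qvec_0 (b b₁ b₂ : ℤ) : qvec b b₁ b₂ 0 = 1 - 3*(b₁-1)*(2*b₁-3) := rfl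
@[simp] lemma qvec_1 (b b₁ b₂ : ℤ) : qvec b b₁ b₂ 1 = -((2*b₁-3)*b₂) := rfl
@[simp] lemma qvec_2 (b b₁ b₂ : ℤ) :
    qvec b b₁ b₂ 2 = 3*b*(2*b₁-3) - 1 + 3*(b₁-1)*(2*b₁-3) + (2*b₁-3)*b₂ := rfl
@[simp] lemma qvec_3 (b b₁ b₂ : ℤ) : qvec b b₁ b₂ 3 = 3*(2*b₁-3) := rfl

/-- the assignment of generators -/
def fgen (b b₁ b₂ : ℤ) (n : ℕ) : Fin 4 → Multiplicative (ZMod 3 × ZMod n) := fun i =>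
  Multiplicative.ofAdd (((pvec i : ℤ) : ZMod 3), ((qvec b b₁ b₂ i : ℤ) : ZMod n))

lemma fgen_apply (b b₁ b₂ : ℤ) (n : ℕ) (i : Fin 4) :
    fgen b b₁ b₂ n i =
      Multiplicative.ofAdd (((pvec i : ℤ) : ZMod 3), ((qvec b b₁ b₂ i : ℤ) : ZMod n)) := rfl

lemma pair_mul (n : ℕ) (x y x' y' : ℤ) :
    (Multiplicative.ofAdd (((x : ℤ) : ZMod 3), ((y : ℤ) : ZMod n))) *
      (Multiplicative.ofAdd (((x' : ℤ) : ZMod 3), ((y' : ℤ) : ZMod n))) =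
    Multiplicative.ofAdd (((x + x' : ℤ) : ZMod 3), ((y + y' : ℤ) : ZMod n)) := by
  rw [← ofAdd_add]
  push_cast
  rfl

lemma pair_zpow (n : ℕ) (x y z : ℤ) :
    (Multiplicative.ofAdd (((x : ℤ) : ZMod 3), ((y : ℤ) : ZMod n))) ^ z =
    Multiplicative.ofAdd (((z * x : ℤ) : ZMod 3), ((z * y : ℤ) : ZMod n)) := by
  rw [← ofAdd_zsmul]
  congr 1
  rw [Prod.smul_mk]
  push_cast [zsmul_eq_mul]
  rfl

lemma pair_eq_one (n : ℕ) (x y : ℤ) (hx : (3:ℤ) ∣ x) (hy : ((n : ℕ) : ℤ) ∣ y) :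
    Multiplicative.ofAdd (((x : ℤ) : ZMod 3), ((y : ℤ) : ZMod n)) = 1 := by
  rw [ofAdd_eq_one, Prod.mk_eq_zero]
  exact ⟨(ZMod.intCast_zmod_eq_zero_iff_dvd x 3).mpr hx,
    (ZMod.intCast_zmod_eq_zero_iff_dvd y n).mpr hy⟩

/-- the inverse hom -/
def theta {M : Type*} [CommGroup M] (n : ℕ) (T S : Additive M)
    (hT : zmultiplesHom (Additive M) T ((3 : ℕ) : ℤ) = 0)
    (hS : zmultiplesHom (Additive M) S ((n : ℕ) : ℤ) = 0) :
    Multiplicative (ZMod 3 × ZMod n) →* M where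
  toFun x := ((ZMod.lift 3 ⟨zmultiplesHom _ T, hT⟩) x.toAdd.1 +
      (ZMod.lift n ⟨zmultiplesHom _ S, hS⟩) x.toAdd.2).toMul
  map_one' := by simp
  map_mul' x y := by
    simp only [toAdd_mul, Prod.fst_add, Prod.snd_add, map_add, ← toMul_add]
    congr 1
    abel

lemma theta_ofAdd {M : Type*} [CommGroup M] (n : ℕ) (T S : Additive M)
    (hT : zmultiplesHom (Additive M) T ((3 : ℕ) : ℤ) = 0)
    (hS : zmultiplesHom (Additive M) S ((n : ℕ) : ℤ) = 0) (x y : ℤ) :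
    theta n T S hT hS (Multiplicative.ofAdd ((x : ZMod 3), (y : ZMod n))) =
      (x • T + y • S).toMul := by
  show (ZMod.lift 3 ⟨zmultiplesHom _ T, hT⟩ ((Multiplicative.ofAdd ((x : ZMod 3), (y : ZMod n))).toAdd.1) +
      ZMod.lift n ⟨zmultiplesHom _ S, hS⟩ ((Multiplicative.ofAdd ((x : ZMod 3), (y : ZMod n))).toAdd.2)).toMul = _
  rw [toAdd_ofAdd]
  rw [show ((x : ZMod 3), (y : ZMod n)).1 = ((x : ℤ) : ZMod 3) from rfl,
    show ((x : ZMod 3), (y : ZMod n)).2 = ((y : ℤ) : ZMod n) from rfl,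
    ZMod.lift_coe, ZMod.lift_coe]
  rfl

end M333aux

open M333aux in
theorem abelianization_M333 (b b₁ b₂ b₃ : ℤ)
    (h₁ : b₁ = 1 ∨ b₁ = 2) (h₂ : b₂ = 1 ∨ b₂ = 2) (h₃ : b₃ = 1 ∨ b₃ = 2)
    (hc : 0 < 3 * b + b₁ + b₂ + b₃) :
    Nonempty (Abelianization (PresentedGroup (rels333 b b₁ b₂ b₃)) ≃*
      Multiplicative (ZMod 3 × ZMod (3 * (3 * b + b₁ + b₂ + b₃)).toNat)) := by
  set n : ℕ := (3 * (3 * b + b₁ + b₂ + b₃)).toNat with hn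
  have hn3c : ((n : ℕ) : ℤ) = 3 * (3 * b + b₁ + b₂ + b₃) := Int.toNat_of_nonneg (by linarith)
  have hδδ : (2*b₁-3)*(2*b₁-3) = 1 := by rcases h₁ with rfl | rfl <;> norm_num
  -- the forward homomorphism kills the relations
  have hrels : ∀ r ∈ rels333 b b₁ b₂ b₃, FreeGroup.lift (fgen b b₁ b₂ n) r = 1 := by
    rintro r (⟨i, rfl⟩ | rfl | rfl | rfl | rfl)
    · simp only [map_mul, map_inv, FreeGroup.lift_apply_of]
      rw [mul_comm (fgen b b₁ b₂ n i.castSucc) (fgen b b₁ b₂ n 3), mul_inv_cancel_right,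
        mul_inv_cancel]
    · simp only [map_mul, map_zpow, FreeGroup.lift_apply_of, fgen_apply]
      rw [pair_zpow, pair_zpow, pair_mul]
      refine pair_eq_one n _ _ ⟨0, by simp; try ring⟩ ?_
      rw [hn3c]
      rcases h₁ with rfl | rfl <;> exact ⟨0, by simp; try ring⟩
    · simp only [map_mul, map_zpow, FreeGroup.lift_apply_of, fgen_apply]
      rw [pair_zpow, pair_zpow, pair_mul]
      exact pair_eq_one n _ _ ⟨1, by simp; try ring⟩ ⟨0, by simp; try ring⟩
    · simp only [map_mul, map_zpow, FreeGroup.lift_apply_of, fgen_apply]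
      rw [pair_zpow, pair_zpow, pair_mul]
      refine pair_eq_one n _ _ ⟨-1, by simp; try ring⟩ ?_
      rw [hn3c]
      rcases h₁ with rfl | rfl
      · exact ⟨-1, by simp; try ring⟩
      · exact ⟨1, by simp; try ring⟩
    · simp only [map_mul, map_zpow, FreeGroup.lift_apply_of, fgen_apply]
      rw [pair_zpow, pair_mul, pair_mul, pair_mul]
      exact pair_eq_one n _ _ ⟨0, by simp; try ring⟩ ⟨0, by simp; try ring⟩
  set G := PresentedGroup (rels333 b b₁ b₂ b₃) with hG
  set φ : G →* Multiplicative (ZMod 3 × ZMod n) := PresentedGroup.toGroup hrels with hφdef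
  set ψ : Abelianization G →* Multiplicative (ZMod 3 × ZMod n) := Abelianization.lift φ with hψdef
  set ρ : FreeGroup (Fin 4) →* Abelianization G :=
    (Abelianization.of).comp (PresentedGroup.mk (rels333 b b₁ b₂ b₃)) with hρdef
  set Sa : Fin 4 → Additive (Abelianization G) :=
    fun i => Additive.ofMul (ρ (FreeGroup.of i)) with hSadef
  have hρ : ∀ r ∈ rels333 b b₁ b₂ b₃, ρ r = 1 := by
    intro r hr
    have h1 : PresentedGroup.mk (rels333 b b₁ b₂ b₃) r = 1 :=
      (QuotientGroup.eq_one_iff r).mpr (Subgroup.subset_normalClosure hr)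
    rw [hρdef, MonoidHom.comp_apply, h1, map_one]
  have hA : ∀ (i : Fin 4) (k : ℤ), ρ (FreeGroup.of i ^ (3:ℤ) * FreeGroup.of 3 ^ k) = 1 →
      (3:ℤ) • Sa i + k • Sa 3 = 0 := by
    intro i k h
    rw [map_mul, map_zpow, map_zpow] at h
    have h2 := congrArg Additive.ofMul h
    rw [hSadef]
    simp only [ofMul_mul, ofMul_zpow, ofMul_one] at h2
    exact h2
  have hA1 : (3:ℤ) • Sa 0 + b₁ • Sa 3 = 0 := hA 0 b₁ (hρ _ (Or.inr (Or.inl rfl)))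
  have hA2 : (3:ℤ) • Sa 1 + b₂ • Sa 3 = 0 := hA 1 b₂ (hρ _ (Or.inr (Or.inr (Or.inl rfl))))
  have hA3 : (3:ℤ) • Sa 2 + b₃ • Sa 3 = 0 := hA 2 b₃ (hρ _ (Or.inr (Or.inr (Or.inr (Or.inl rfl)))))
  have hA4 : Sa 0 + Sa 1 + Sa 2 + (-b) • Sa 3 = 0 := by
    have h := hρ _ (Or.inr (Or.inr (Or.inr (Or.inr rfl))))
    rw [map_mul, map_mul, map_mul, map_zpow] at h
    have h2 := congrArg Additive.ofMul h
    rw [hSadef]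
    simpa [ofMul_mul, ofMul_zpow] using h2
  set SS : Additive (Abelianization G) := Sa 0 + (b₁-1) • Sa 3 with hSS
  set TT : Additive (Abelianization G) := Sa 1 + ((2*b₁-3)*b₂) • SS with hTT
  have hT3 : zmultiplesHom (Additive (Abelianization G)) TT ((3 : ℕ) : ℤ) = 0 := by
    show ((3:ℕ) : ℤ) • TT = 0
    rw [hTT, hSS]
    push_cast
    linear_combination (norm := module) hA2 + ((2*b₁-3)*b₂) • hA1 + b₂ • hδδ • Sa 3
  have hSn : zmultiplesHom (Additive (Abelianization G)) SS ((n : ℕ) : ℤ) = 0 := by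
    show ((n:ℕ) : ℤ) • SS = 0
    rw [hSS, hn3c]
    linear_combination (norm := module) ((3*b+b₁+b₂+b₃) + (2*b₁-3)) • hA1 +
      (2*b₁-3) • hA2 + (2*b₁-3) • hA3 + (-(3*(2*b₁-3))) • hA4
  -- the linear algebra: the inverse images of the generators
  have g0 : (0:ℤ) • TT + (1 - 3*(b₁-1)*(2*b₁-3)) • SS = Sa 0 := by
    rw [hTT, hSS]
    linear_combination (norm := module) (-((b₁-1)*(2*b₁-3))) • hA1 + (-(b₁-1)) • hδδ • Sa 3
  have g1 : (1:ℤ) • TT + (-((2*b₁-3)*b₂)) • SS = Sa 1 := by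
    rw [hTT, hSS]; module
  have g3 : (0:ℤ) • TT + (3*(2*b₁-3)) • SS = Sa 3 := by
    rw [hTT, hSS]
    linear_combination (norm := module) (2*b₁-3) • hA1 + (1 : ℤ) • hδδ • Sa 3
  have g2 : (-1:ℤ) • TT +
      (3*b*(2*b₁-3) - 1 + 3*(b₁-1)*(2*b₁-3) + (2*b₁-3)*b₂) • SS = Sa 2 := by
    rw [hTT, hSS]
    linear_combination (norm := module) ((b + (b₁-1))*(2*b₁-3)) • hA1 + (-1 : ℤ) • hA4 +
      (b + (b₁-1)) • hδδ • Sa 3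
  -- values of ψ on the generators
  have hψgen : ∀ i : Fin 4, ψ (Abelianization.of (PresentedGroup.of i)) =
      Multiplicative.ofAdd (((pvec i : ℤ) : ZMod 3), ((qvec b b₁ b₂ i : ℤ) : ZMod n)) := by
    intro i
    rw [hψdef, Abelianization.lift_apply_of, hφdef, PresentedGroup.toGroup.of]
    rfl
  have key : ∀ i : Fin 4,
      (((pvec i : ℤ)) • TT + ((qvec b b₁ b₂ i : ℤ)) • SS).toMul =
        Abelianization.of (PresentedGroup.of i) := by
    intro i
    fin_cases i
    · exact congrArg Additive.toMul g0
    · exact congrArg Additive.toMul g1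
    · exact congrArg Additive.toMul g2
    · exact congrArg Additive.toMul g3
  have hκ : (theta n TT SS hT3 hSn).comp ψ = MonoidHom.id (Abelianization G) := by
    apply Abelianization.hom_ext
    apply PresentedGroup.ext
    intro i
    simp only [MonoidHom.comp_apply, MonoidHom.id_apply]
    rw [hψgen i, theta_ofAdd]
    exact key i
  have hinj : Function.Injective ψ := by
    intro x y hxy
    have h1 := DFunLike.congr_fun hκ x
    have h2 := DFunLike.congr_fun hκ y
    simp only [MonoidHom.comp_apply, MonoidHom.id_apply] at h1 h2
    rw [← h1, ← h2, hxy]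
  have hψ0 : ψ (Abelianization.of (PresentedGroup.of 0)) =
      Multiplicative.ofAdd (((0:ℤ) : ZMod 3), ((1 - 3*(b₁-1)*(2*b₁-3) : ℤ) : ZMod n)) := hψgen 0
  have hψ1 : ψ (Abelianization.of (PresentedGroup.of 1)) =
      Multiplicative.ofAdd (((1:ℤ) : ZMod 3), ((-((2*b₁-3)*b₂) : ℤ) : ZMod n)) := hψgen 1
  have hψ3 : ψ (Abelianization.of (PresentedGroup.of 3)) =
      Multiplicative.ofAdd (((0:ℤ) : ZMod 3), ((3*(2*b₁-3) : ℤ) : ZMod n)) := hψgen 3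
  have hψS : ψ SS.toMul = Multiplicative.ofAdd (((0:ℤ) : ZMod 3), ((1:ℤ) : ZMod n)) := by
    rw [hSS, toMul_add, toMul_zsmul, map_mul, map_zpow,
      show (Sa 0).toMul = Abelianization.of (PresentedGroup.of 0) from rfl,
      show (Sa 3).toMul = Abelianization.of (PresentedGroup.of 3) from rfl,
      hψ0, hψ3, pair_zpow, pair_mul]
    refine congrArg Multiplicative.ofAdd (Prod.ext ?_ ?_) <;> (push_cast; ring)
  have hψT : ψ TT.toMul = Multiplicative.ofAdd (((1:ℤ) : ZMod 3), ((0:ℤ) : ZMod n)) := by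
    rw [hTT, toMul_add, toMul_zsmul, map_mul, map_zpow,
      show (Sa 1).toMul = Abelianization.of (PresentedGroup.of 1) from rfl,
      hψ1, hψS, pair_zpow, pair_mul]
    refine congrArg Multiplicative.ofAdd (Prod.ext ?_ ?_) <;> (push_cast; ring)
  have hsurj : Function.Surjective ψ := by
    intro x
    obtain ⟨u, hu⟩ := ZMod.intCast_surjective (n := 3) x.toAdd.1
    obtain ⟨v, hv⟩ := ZMod.intCast_surjective (n := n) x.toAdd.2
    refine ⟨(u • TT + v • SS).toMul, ?_⟩
    rw [toMul_add, toMul_zsmul, toMul_zsmul, map_mul, map_zpow, map_zpow, hψT, hψS,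
      pair_zpow, pair_zpow, pair_mul,
      show (u*1 + v*0 : ℤ) = u by ring, show (u*0 + v*1 : ℤ) = v by ring, hu, hv]
    simp
  exact ⟨MulEquiv.ofBijective ψ ⟨hinj, hsurj⟩⟩
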